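/- Let H(t) ∈ ℂ[[t]] be an even formal power series (all coefficients in odd degrees vanish) with constant term 1. Then H is 2-algebraically rigid if and only if there exists a ∈ ℂ such that H = D_{a,0}, i.e. H(t)·(exp(at) − exp(−at)) = at·(exp(at) + exp(−at)) (formally H(t) = at·coth(at)), where for a = 0 this means H = 1. -/

import Mathlib

noncomputable section

namespace RigidGenus

variable {R : Type*} [Field R]

/-- Termwise substitution `t ↦ w·t` on Laurent series: the coefficient of `t^k`
is multiplied by `w^k`. -/
def zscale (w : R) (f : LaurentSeries R) : LaurentSeries R where
  coeff k := w ^ k * f.coeff k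
  isPWO_support' := f.isPWO_support'.mono (fun k hk => by
    simp only [Function.mem_support, ne_eq] at hk ⊢
    exact fun h => hk (by rw [h, mul_zero]))

/-- Termwise derivative of a Laurent series: `(∑ f_k t^k)' = ∑ k f_k t^(k-1)`. -/
def lderiv (f : LaurentSeries R) : LaurentSeries R where
  coeff k := ((k + 1 : ℤ) : R) * f.coeff (k + 1)
  isPWO_support' := by
    have himg : ((fun k : ℤ => k - 1) '' (Function.support f.coeff)).IsPWO :=
      f.isPWO_support'.image_of_monotone (fun a b h => sub_le_sub_right h 1)
    refine himg.mono (fun k hk => ?_)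
    simp only [Function.mem_support, ne_eq] at hk
    exact ⟨k + 1, fun h => hk (by rw [h, mul_zero]), by ring⟩

/-- `F_H = H(t)/t`, as a formal Laurent series. -/
def FH (H : PowerSeries R) : LaurentSeries R :=
  HahnSeries.single (-1 : ℤ) (1 : R) * HahnSeries.ofPowerSeries ℤ R H

/-- `S_H(w_0,…,w_n;t) = ∑_i ∏_{j ≠ i} F_H((w_j - w_i) t)`. -/
def SH (H : PowerSeries R) {n : ℕ} (w : Fin (n + 1) → ℤ) : LaurentSeries R :=
  ∑ i : Fin (n + 1), ∏ j ∈ Finset.univ.erase i, zscale ((w j - w i : ℤ) : R) (FH H)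

/-- `H` is `n`-algebraically rigid: for all `1 ≤ m ≤ n` and pairwise distinct
integers `w_0, …, w_m`, the Laurent series `S_H(w_0,…,w_m;t)` is constant. -/
def AlgRigid (H : PowerSeries R) (n : ℕ) : Prop :=
  ∀ m : ℕ, 1 ≤ m → m ≤ n → ∀ w : Fin (m + 1) → ℤ, Function.Injective w →
    ∀ k : ℤ, k ≠ 0 → (SH H w).coeff k = 0

/-- The formal exponential series `exp (a t)`. -/
def expS (a : R) : PowerSeries R := PowerSeries.mk fun n => a ^ n / n.factorial

/-- The formal sine series `sin (a t)`. -/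
def sinS (a : R) : PowerSeries R :=
  PowerSeries.mk fun n => if n % 2 = 1 then (-1 : R) ^ (n / 2) * a ^ n / n.factorial else 0

/-- The formal cosine series `cos (a t)`. -/
def cosS (a : R) : PowerSeries R :=
  PowerSeries.mk fun n => if n % 2 = 0 then (-1 : R) ^ (n / 2) * a ^ n / n.factorial else 0

/-- `H = D_{a,b}`, the generalized Todd series `t(a·coth(at)+b)`: for `a ≠ 0` it is
characterized by `D_{a,b}(t)·(e^{at} - e^{-at}) = t·(a(e^{at}+e^{-at}) + b(e^{at}-e^{-at}))`,
and `D_{0,b}(t) = 1 + bt`. -/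
def IsDab (a b : R) (H : PowerSeries R) : Prop :=
  (a ≠ 0 ∧ H * (expS a - expS (-a)) =
      PowerSeries.X * (PowerSeries.C a * (expS a + expS (-a)) +
        PowerSeries.C b * (expS a - expS (-a)))) ∨
  (a = 0 ∧ H = 1 + PowerSeries.C b * PowerSeries.X)

/-- `H = G_{a,b}`, the series `t(a·cot(at)+b)`: for `a ≠ 0` it is characterized by
`G_{a,b}(t)·sin(at) = t·(a·cos(at) + b·sin(at))`, and `G_{0,b}(t) = 1 + bt`. -/
def IsGab (a b : R) (H : PowerSeries R) : Prop :=
  (a ≠ 0 ∧ H * sinS a =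
      PowerSeries.X * (PowerSeries.C a * cosS a + PowerSeries.C b * sinS a)) ∨
  (a = 0 ∧ H = 1 + PowerSeries.C b * PowerSeries.X)

/-! ### Auxiliary lemmas -/

open PowerSeries HahnSeries Finset

@[simp] lemma zscale_coeff (w : ℂ) (f : LaurentSeries ℂ) (k : ℤ) :
    (zscale w f).coeff k = w ^ k * f.coeff k := rfl

lemma zscale_support (w : ℂ) (f : LaurentSeries ℂ) :
    (zscale w f).support ⊆ f.support := by
  intro k hk
  rw [HahnSeries.mem_support] at hk ⊢
  exact fun h => hk (by rw [zscale_coeff, h, mul_zero])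

lemma zscale_single (w : ℂ) (n : ℤ) (c : ℂ) :
    zscale w (HahnSeries.single n c) = HahnSeries.single n (w ^ n * c) := by
  ext k
  rw [zscale_coeff]
  rcases eq_or_ne k n with rfl | h
  · rw [HahnSeries.coeff_single_same, HahnSeries.coeff_single_same]
  · rw [HahnSeries.coeff_single_of_ne h, HahnSeries.coeff_single_of_ne h, mul_zero]

lemma zscale_one_left (f : LaurentSeries ℂ) : zscale 1 f = f := by
  ext k; rw [zscale_coeff, one_zpow, one_mul]

lemma zscale_mul {w : ℂ} (hw : w ≠ 0) (f g : LaurentSeries ℂ) :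
    zscale w (f * g) = zscale w f * zscale w g := by
  ext k
  rw [zscale_coeff, HahnSeries.coeff_mul,
    HahnSeries.coeff_mul_left' f.isPWO_support (zscale_support w f), Finset.mul_sum]
  have h1 : ∀ ij ∈ Finset.antidiagonal f.isPWO_support g.isPWO_support k,
      w ^ k * (f.coeff ij.1 * g.coeff ij.2)
        = (zscale w f).coeff ij.1 * (zscale w g).coeff ij.2 := by
    rintro ⟨i, j⟩ hij
    rw [Finset.mem_antidiagonal] at hij
    rw [zscale_coeff, zscale_coeff, ← hij.2.2, zpow_add₀ hw]
    ring
  rw [Finset.sum_congr rfl h1]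
  refine (Finset.sum_subset (fun ij hij => ?_) (fun ij hij hij2 => ?_)).symm
  · rw [Finset.mem_antidiagonal] at hij ⊢
    exact ⟨hij.1, zscale_support w g hij.2.1, hij.2.2⟩
  · rw [Finset.mem_antidiagonal] at hij hij2
    push_neg at hij2
    have := hij2 hij.1
    by_cases hj : ij.2 ∈ (zscale w g).support
    · exact absurd (this hj) (by simpa using hij.2.2)
    · simp only [HahnSeries.mem_support, ne_eq, not_not] at hj
      rw [hj, mul_zero]

lemma zscale_ofP (w : ℂ) (φ : PowerSeries ℂ) :
    zscale w (HahnSeries.ofPowerSeries ℤ ℂ φ)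
      = HahnSeries.ofPowerSeries ℤ ℂ (PowerSeries.rescale w φ) := by
  ext k
  rw [zscale_coeff, PowerSeries.coeff_coe, PowerSeries.coeff_coe]
  rcases lt_or_ge k 0 with hk | hk
  · rw [if_pos hk, if_pos hk, mul_zero]
  · rw [if_neg (not_lt.2 hk), if_neg (not_lt.2 hk), PowerSeries.coeff_rescale]
    have : w ^ k = w ^ k.natAbs := by
      rw [← zpow_natCast, Int.natAbs_of_nonneg hk]
    rw [this]

lemma coeff_expS (b : ℂ) (n : ℕ) : PowerSeries.coeff n (expS b) = b ^ n / n.factorial :=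
  PowerSeries.coeff_mk _ _

lemma expS_eq_rescale_exp (b : ℂ) : expS b = PowerSeries.rescale b (PowerSeries.exp ℂ) := by
  ext n
  rw [coeff_expS, PowerSeries.coeff_rescale, PowerSeries.coeff_exp, map_div₀, map_one,
    map_natCast]
  ring

lemma expS_mul_expS (b c : ℂ) : expS b * expS c = expS (b + c) := by
  rw [expS_eq_rescale_exp, expS_eq_rescale_exp, expS_eq_rescale_exp,
    PowerSeries.exp_mul_exp_eq_exp_add]

lemma rescale_expS (b c : ℂ) : PowerSeries.rescale c (expS b) = expS (b * c) := by
  ext n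
  rw [PowerSeries.coeff_rescale, coeff_expS, coeff_expS, mul_pow]
  ring

lemma expS_zero : expS (0 : ℂ) = 1 := by
  ext n
  rw [coeff_expS, PowerSeries.coeff_one]
  rcases Nat.eq_zero_or_pos n with rfl | hn
  · norm_num
  · rw [zero_pow hn.ne', zero_div, if_neg hn.ne']

lemma constantCoeff_expS (b : ℂ) : PowerSeries.constantCoeff (expS b) = 1 := by
  rw [← PowerSeries.coeff_zero_eq_constantCoeff, coeff_expS]
  norm_num

lemma rescale_C' (c b : ℂ) : PowerSeries.rescale c (PowerSeries.C b) = PowerSeries.C b := by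
  ext n
  rw [PowerSeries.coeff_rescale, PowerSeries.coeff_C]
  split
  · rename_i h; rw [h, pow_zero, one_mul]
  · rw [mul_zero]

/-- `e^{a n t}` as a Laurent series. -/
def eK (a : ℂ) (n : ℤ) : LaurentSeries ℂ := HahnSeries.ofPowerSeries ℤ ℂ (expS (a * n))

def sK (a : ℂ) (n : ℤ) : LaurentSeries ℂ := eK a n - eK a (-n)
def cK (a : ℂ) (n : ℤ) : LaurentSeries ℂ := eK a n + eK a (-n)

lemma eK_mul (a : ℂ) (m n : ℤ) : eK a m * eK a n = eK a (m + n) := by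
  unfold eK
  rw [← map_mul, expS_mul_expS]
  congr 2
  push_cast
  ring

lemma eK_zero (a : ℂ) : eK a 0 = 1 := by
  unfold eK
  rw [Int.cast_zero, mul_zero, expS_zero, map_one]

lemma eK_mul_eK_neg (a : ℂ) (n : ℤ) : eK a n * eK a (-n) = 1 := by
  rw [eK_mul, add_neg_cancel, eK_zero]

lemma eK_ne_zero (a : ℂ) (n : ℤ) : eK a n ≠ 0 :=
  left_ne_zero_of_mul_eq_one (eK_mul_eK_neg a n)

lemma eK_neg (a : ℂ) (n : ℤ) : eK a (-n) = (eK a n)⁻¹ :=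
  eq_inv_of_mul_eq_one_left (by rw [mul_comm]; exact eK_mul_eK_neg a n)

lemma sK_neg (a : ℂ) (n : ℤ) : sK a (-n) = -sK a n := by
  unfold sK; rw [neg_neg]; ring

lemma cK_neg (a : ℂ) (n : ℤ) : cK a (-n) = cK a n := by
  unfold cK; rw [neg_neg]; ring

lemma sK_coeff_one (a : ℂ) (n : ℤ) : (sK a n).coeff ((1 : ℕ) : ℤ) = 2 * a * n := by
  unfold sK eK
  rw [HahnSeries.coeff_sub, HahnSeries.ofPowerSeries_apply_coeff,
    HahnSeries.ofPowerSeries_apply_coeff, coeff_expS, coeff_expS]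
  norm_num
  ring

lemma sK_ne_zero {a : ℂ} (ha : a ≠ 0) {n : ℤ} (hn : n ≠ 0) : sK a n ≠ 0 := by
  intro h
  have h1 := sK_coeff_one a n
  rw [h, HahnSeries.coeff_zero] at h1
  have hn' : (n : ℂ) ≠ 0 := Int.cast_ne_zero.2 hn
  have : (2 : ℂ) * a * n ≠ 0 := by
    apply mul_ne_zero (mul_ne_zero two_ne_zero ha) hn'
  exact this h1.symm

lemma FH_coeff (H : PowerSeries ℂ) (k : ℤ) :
    (FH H).coeff k = (HahnSeries.ofPowerSeries ℤ ℂ H).coeff (k + 1) := by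
  have h := HahnSeries.coeff_single_mul_add (r := (1 : ℂ))
    (x := HahnSeries.ofPowerSeries ℤ ℂ H) (a := k + 1) (b := (-1 : ℤ))
  rw [one_mul] at h
  rw [FH, ← h]
  norm_num

lemma FH_coeff_even_eq_zero {H : PowerSeries ℂ}
    (heven : ∀ n : ℕ, Odd n → PowerSeries.coeff n H = 0) {k : ℤ} (hk : Even k) :
    (FH H).coeff k = 0 := by
  rw [FH_coeff, PowerSeries.coeff_coe]
  split
  · rfl
  · exact heven _ (Int.natAbs_odd.2 hk.add_one)

lemma zscale_neg_FH {H : PowerSeries ℂ}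
    (heven : ∀ n : ℕ, Odd n → PowerSeries.coeff n H = 0) (w : ℂ) :
    zscale (-w) (FH H) = -zscale w (FH H) := by
  ext k
  rw [zscale_coeff, HahnSeries.coeff_neg, zscale_coeff]
  rcases Int.even_or_odd k with he | ho
  · rw [FH_coeff_even_eq_zero heven he, mul_zero, mul_zero, neg_zero]
  · rw [ho.neg_zpow, neg_mul]

lemma SH_two (H : PowerSeries ℂ) (w : Fin 2 → ℤ) :
    SH H w = zscale ((w 1 - w 0 : ℤ) : ℂ) (FH H) + zscale ((w 0 - w 1 : ℤ) : ℂ) (FH H) := by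
  simp only [SH, Fin.sum_univ_succ, Fin.sum_univ_zero, add_zero, Fin.succ_zero_eq_one,
    show (Finset.univ.erase (0 : Fin 2)) = {1} from by decide,
    show (Finset.univ.erase (1 : Fin 2)) = {0} from by decide,
    Finset.prod_singleton]

lemma SH_three (H : PowerSeries ℂ) (w : Fin 3 → ℤ) :
    SH H w =
      zscale ((w 1 - w 0 : ℤ) : ℂ) (FH H) * zscale ((w 2 - w 0 : ℤ) : ℂ) (FH H)
      + zscale ((w 0 - w 1 : ℤ) : ℂ) (FH H) * zscale ((w 2 - w 1 : ℤ) : ℂ) (FH H)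
      + zscale ((w 0 - w 2 : ℤ) : ℂ) (FH H) * zscale ((w 1 - w 2 : ℤ) : ℂ) (FH H) := by
  simp only [SH, Fin.sum_univ_succ, Fin.sum_univ_zero, add_zero, Fin.succ_zero_eq_one,
    show ((1 : Fin 2).succ) = (2 : Fin 3) from by decide,
    show (Finset.univ.erase (0 : Fin 3)) = {1, 2} from by decide,
    show (Finset.univ.erase (1 : Fin 3)) = {0, 2} from by decide,
    show (Finset.univ.erase (2 : Fin 3)) = {0, 1} from by decide]
  rw [Finset.prod_insert (by decide), Finset.prod_singleton,
    Finset.prod_insert (by decide), Finset.prod_singleton,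
    Finset.prod_insert (by decide), Finset.prod_singleton]
  ring

lemma SH_two_eq_zero {H : PowerSeries ℂ}
    (heven : ∀ n : ℕ, Odd n → PowerSeries.coeff n H = 0) (w : Fin 2 → ℤ) :
    SH H w = 0 := by
  rw [SH_two]
  have h : ((w 0 - w 1 : ℤ) : ℂ) = -((w 1 - w 0 : ℤ) : ℂ) := by push_cast; ring
  rw [h, zscale_neg_FH heven, add_neg_cancel]

lemma zscale_FH_mul_sK {a : ℂ} (ha : a ≠ 0) {H : PowerSeries ℂ}
    (hD : H * (expS a - expS (-a))
      = PowerSeries.X * (PowerSeries.C a * (expS a + expS (-a))))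
    {p : ℤ} (hp : p ≠ 0) :
    zscale (p : ℂ) (FH H) * sK a p = HahnSeries.C a * cK a p := by
  have hpc : (p : ℂ) ≠ 0 := Int.cast_ne_zero.2 hp
  have hs : PowerSeries.rescale (p : ℂ) (expS a - expS (-a))
      = expS (a * (p : ℤ)) - expS (a * ((-p : ℤ) : ℂ)) := by
    rw [map_sub, rescale_expS, rescale_expS]
    congr 2
    push_cast; ring
  have hc : PowerSeries.rescale (p : ℂ) (expS a + expS (-a))
      = expS (a * (p : ℤ)) + expS (a * ((-p : ℤ) : ℂ)) := by
    rw [map_add, rescale_expS, rescale_expS]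
    congr 2
    push_cast; ring
  have h1 : PowerSeries.rescale (p : ℂ) (H * (expS a - expS (-a)))
      = PowerSeries.rescale (p : ℂ)
          (PowerSeries.X * (PowerSeries.C a * (expS a + expS (-a)))) := by rw [hD]
  rw [map_mul, hs, map_mul, map_mul, hc, PowerSeries.rescale_X, rescale_C'] at h1
  have h2 := congrArg (HahnSeries.ofPowerSeries ℤ ℂ) h1
  rw [map_mul, map_sub, map_mul, map_mul, map_mul, HahnSeries.ofPowerSeries_C,
    HahnSeries.ofPowerSeries_C, HahnSeries.ofPowerSeries_X, map_add] at h2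
  have h2' : (HahnSeries.ofPowerSeries ℤ ℂ) (PowerSeries.rescale (p : ℂ) H) * sK a p
      = HahnSeries.C (p : ℂ) * HahnSeries.single (1 : ℤ) (1 : ℂ)
        * (HahnSeries.C a * cK a p) := h2
  rw [FH, zscale_mul hpc, zscale_single, zscale_ofP, mul_assoc, h2']
  rw [HahnSeries.C_apply, HahnSeries.C_apply]
  rw [show ((p : ℂ) ^ (-1 : ℤ) * 1) = (p : ℂ)⁻¹ from by rw [zpow_neg_one, mul_one]]
  calc HahnSeries.single (-1 : ℤ) ((p:ℂ)⁻¹)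
        * (HahnSeries.single (0:ℤ) ((p:ℂ)) * HahnSeries.single (1:ℤ) (1:ℂ)
          * (HahnSeries.single (0:ℤ) a * cK a p))
      = (HahnSeries.single (-1 : ℤ) ((p:ℂ)⁻¹) * HahnSeries.single (0:ℤ) ((p:ℂ))
          * HahnSeries.single (1:ℤ) (1:ℂ)) * (HahnSeries.single (0:ℤ) a * cK a p) := by
        ring
    _ = HahnSeries.single (0:ℤ) a * cK a p := by
        rw [HahnSeries.single_mul_single, HahnSeries.single_mul_single,
          inv_mul_cancel₀ hpc]
        norm_num [HahnSeries.single_zero_one]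

lemma SH_key {a : ℂ} (ha : a ≠ 0) {H : PowerSeries ℂ}
    (hD : H * (expS a - expS (-a))
      = PowerSeries.X * (PowerSeries.C a * (expS a + expS (-a))))
    {u v : ℤ} (hu : u ≠ 0) (hv : v ≠ 0) (huv : u + v ≠ 0) :
    zscale ((u : ℤ) : ℂ) (FH H) * zscale (((u + v : ℤ)) : ℂ) (FH H)
      + zscale (((-u : ℤ)) : ℂ) (FH H) * zscale ((v : ℤ) : ℂ) (FH H)
      + zscale (((-(u + v) : ℤ)) : ℂ) (FH H) * zscale (((-v : ℤ)) : ℂ) (FH H)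
      = HahnSeries.C (a * a) := by
  have hsu : sK a u ≠ 0 := sK_ne_zero ha hu
  have hsv : sK a v ≠ 0 := sK_ne_zero ha hv
  have hsuv : sK a (u + v) ≠ 0 := sK_ne_zero ha huv
  have E1 := zscale_FH_mul_sK ha hD hu
  have E2 := zscale_FH_mul_sK ha hD huv
  have E3 := zscale_FH_mul_sK ha hD hv
  have E4 : zscale (((-u : ℤ)) : ℂ) (FH H) * sK a u = -(HahnSeries.C a * cK a u) := by
    have h := zscale_FH_mul_sK ha hD (neg_ne_zero.2 hu)
    rw [sK_neg, cK_neg] at h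
    linear_combination -h
  have E5 : zscale (((-v : ℤ)) : ℂ) (FH H) * sK a v = -(HahnSeries.C a * cK a v) := by
    have h := zscale_FH_mul_sK ha hD (neg_ne_zero.2 hv)
    rw [sK_neg, cK_neg] at h
    linear_combination -h
  have E6 : zscale (((-(u + v) : ℤ)) : ℂ) (FH H) * sK a (u + v)
      = -(HahnSeries.C a * cK a (u + v)) := by
    have h := zscale_FH_mul_sK ha hD (neg_ne_zero.2 huv)
    rw [sK_neg, cK_neg] at h
    linear_combination -h
  have hI : cK a u * cK a (u + v) * sK a v - cK a u * cK a v * sK a (u + v)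
      + cK a (u + v) * cK a v * sK a u = sK a u * sK a v * sK a (u + v) := by
    have e1 : sK a u = eK a u - (eK a u)⁻¹ := by rw [sK, eK_neg]
    have e2 : sK a v = eK a v - (eK a v)⁻¹ := by rw [sK, eK_neg]
    have e3 : sK a (u + v) = eK a u * eK a v - (eK a u * eK a v)⁻¹ := by
      rw [sK, eK_neg, eK_mul]
    have c1 : cK a u = eK a u + (eK a u)⁻¹ := by rw [cK, eK_neg]
    have c2 : cK a v = eK a v + (eK a v)⁻¹ := by rw [cK, eK_neg]
    have c3 : cK a (u + v) = eK a u * eK a v + (eK a u * eK a v)⁻¹ := by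
      rw [cK, eK_neg, eK_mul]
    have hy : eK a u ≠ 0 := eK_ne_zero a u
    have hz : eK a v ≠ 0 := eK_ne_zero a v
    rw [e1, e2, e3, c1, c2, c3]
    simp only [mul_inv]
    ring
  have hA : (HahnSeries.C (a * a) : LaurentSeries ℂ) = HahnSeries.C a * HahnSeries.C a := by
    rw [map_mul]
  refine mul_right_cancel₀ (mul_ne_zero (mul_ne_zero hsu hsv) hsuv) ?_
  linear_combination
    (zscale (((u + v : ℤ)) : ℂ) (FH H) * sK a (u + v) * sK a v) * E1
    + (HahnSeries.C a * cK a u * sK a v) * E2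
    + (zscale ((v : ℤ) : ℂ) (FH H) * sK a v * sK a (u + v)) * E4
    + (-(HahnSeries.C a * cK a u) * sK a (u + v)) * E3
    + (zscale (((-v : ℤ)) : ℂ) (FH H) * sK a v * sK a u) * E6
    + (-(HahnSeries.C a * cK a (u + v)) * sK a u) * E5
    + (HahnSeries.C a * HahnSeries.C a) * hI
    - (sK a u * sK a v * sK a (u + v)) * hA

/-- The key power-series consequence of rigidity for weights (0,1,2), for even H. -/
lemma SH_012 {H : PowerSeries ℂ}
    (heven : ∀ n : ℕ, Odd n → PowerSeries.coeff n H = 0) :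
    SH H ![0, 1, 2] = HahnSeries.single (-2 : ℤ) (1 : ℂ)
      * HahnSeries.ofPowerSeries ℤ ℂ (H * PowerSeries.rescale 2 H - H * H) := by
  rw [SH_three]
  norm_num [Matrix.cons_val_two, Matrix.vecHead, Matrix.vecTail]
  rw [show ((-1 : ℂ)) = -(1 : ℂ) from by norm_num, show ((-2 : ℂ)) = -(2 : ℂ) from by norm_num,
    zscale_neg_FH heven, zscale_neg_FH heven, zscale_one_left]
  rw [show (FH H) = HahnSeries.single (-1 : ℤ) (1 : ℂ) * HahnSeries.ofPowerSeries ℤ ℂ H from rfl]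
  rw [zscale_mul two_ne_zero, zscale_single, zscale_ofP]
  rw [show ((2 : ℂ) ^ (-1 : ℤ) * 1) = (2 : ℂ)⁻¹ from by rw [zpow_neg_one, mul_one]]
  have hfact1 : (HahnSeries.single (-1 : ℤ) (1 : ℂ) : LaurentSeries ℂ)
        * HahnSeries.single (-1 : ℤ) ((2 : ℂ)⁻¹)
      + HahnSeries.single (-1 : ℤ) (1 : ℂ) * HahnSeries.single (-1 : ℤ) ((2 : ℂ)⁻¹)
      = HahnSeries.single (-2 : ℤ) (1 : ℂ) := by
    rw [HahnSeries.single_mul_single]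
    ext k
    rw [HahnSeries.coeff_add]
    rcases eq_or_ne k (-2 : ℤ) with rfl | hk
    · rw [show (-1 + -1 : ℤ) = -2 from by norm_num, HahnSeries.coeff_single_same,
        HahnSeries.coeff_single_same]
      norm_num
    · rw [show (-1 + -1 : ℤ) = -2 from by norm_num, HahnSeries.coeff_single_of_ne hk,
        HahnSeries.coeff_single_of_ne hk]
      norm_num
  have hfact2 : (HahnSeries.single (-1 : ℤ) (1 : ℂ) : LaurentSeries ℂ)
        * HahnSeries.single (-1 : ℤ) (1 : ℂ)
      = HahnSeries.single (-2 : ℤ) (1 : ℂ) := by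
    rw [HahnSeries.single_mul_single]
    norm_num
  linear_combination
    ((HahnSeries.ofPowerSeries ℤ ℂ H)
      * (HahnSeries.ofPowerSeries ℤ ℂ (PowerSeries.rescale 2 H))) * hfact1
    - ((HahnSeries.ofPowerSeries ℤ ℂ H) * (HahnSeries.ofPowerSeries ℤ ℂ H)) * hfact2

lemma Q_coeff_zero {H : PowerSeries ℂ}
    (heven : ∀ n : ℕ, Odd n → PowerSeries.coeff n H = 0)
    (hrig : ∀ k : ℤ, k ≠ 0 → (SH H ![0, 1, 2]).coeff k = 0)
    {n : ℕ} (hn : n ≠ 2) :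
    PowerSeries.coeff n (H * PowerSeries.rescale 2 H - H * H) = 0 := by
  have h := hrig ((n : ℤ) - 2) (by omega)
  rw [SH_012 heven] at h
  set Q := H * PowerSeries.rescale 2 H - H * H
  have h2 := HahnSeries.coeff_single_mul_add (r := (1 : ℂ))
    (x := HahnSeries.ofPowerSeries ℤ ℂ Q) (a := (n : ℤ)) (b := (-2 : ℤ))
  rw [one_mul, show ((n : ℤ) + -2) = (n : ℤ) - 2 from by ring] at h2
  rw [h2, HahnSeries.ofPowerSeries_apply_coeff] at h
  exact h

lemma unique_of_Q {H H' : PowerSeries ℂ}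
    (h0 : PowerSeries.constantCoeff H = 1) (h0' : PowerSeries.constantCoeff H' = 1)
    (h2 : PowerSeries.coeff 2 H = PowerSeries.coeff 2 H')
    (hQ : ∀ n : ℕ, n ≠ 2 → PowerSeries.coeff n (H * PowerSeries.rescale 2 H - H * H) = 0)
    (hQ' : ∀ n : ℕ, n ≠ 2 →
      PowerSeries.coeff n (H' * PowerSeries.rescale 2 H' - H' * H') = 0) :
    H = H' := by
  ext n
  induction n using Nat.strong_induction_on with
  | _ n ih =>
    rcases Nat.eq_zero_or_pos n with rfl | hn1
    · rw [PowerSeries.coeff_zero_eq_constantCoeff, h0, h0']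
    rcases eq_or_ne n 2 with rfl | hn2
    · exact h2
    have key : ∀ G : PowerSeries ℂ, PowerSeries.constantCoeff G = 1 →
        PowerSeries.coeff n (G * PowerSeries.rescale 2 G - G * G) = 0 →
        ((2 : ℂ) ^ n - 1) * PowerSeries.coeff n G
          = -∑ p ∈ (Finset.HasAntidiagonal.antidiagonal n).erase (0, n),
              PowerSeries.coeff p.1 G * ((2 : ℂ) ^ p.2 - 1) * PowerSeries.coeff p.2 G := by
      intro G hG hQn
      have hexp : PowerSeries.coeff n (G * PowerSeries.rescale 2 G - G * G)
          = ∑ p ∈ Finset.HasAntidiagonal.antidiagonal n,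
              PowerSeries.coeff p.1 G * ((2 : ℂ) ^ p.2 - 1) * PowerSeries.coeff p.2 G := by
        rw [map_sub, PowerSeries.coeff_mul, PowerSeries.coeff_mul, ← Finset.sum_sub_distrib]
        refine Finset.sum_congr rfl fun p _ => ?_
        rw [PowerSeries.coeff_rescale]
        ring
      rw [hexp, ← Finset.add_sum_erase _ _
        (show ((0 : ℕ), n) ∈ Finset.HasAntidiagonal.antidiagonal n by simp)] at hQn
      simp only [PowerSeries.coeff_zero_eq_constantCoeff, hG, one_mul] at hQn
      linear_combination hQn
    have hH := key H h0 (hQ n hn2)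
    have hH' := key H' h0' (hQ' n hn2)
    have hsum : (∑ p ∈ (Finset.HasAntidiagonal.antidiagonal n).erase (0, n),
          PowerSeries.coeff p.1 H * ((2 : ℂ) ^ p.2 - 1) * PowerSeries.coeff p.2 H)
        = ∑ p ∈ (Finset.HasAntidiagonal.antidiagonal n).erase (0, n),
            PowerSeries.coeff p.1 H' * ((2 : ℂ) ^ p.2 - 1) * PowerSeries.coeff p.2 H' := by
      refine Finset.sum_congr rfl fun p hp => ?_
      rw [Finset.mem_erase, Finset.HasAntidiagonal.mem_antidiagonal] at hp
      rcases Nat.eq_zero_or_pos p.2 with h20 | h2p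
      · rw [h20]; norm_num
      · have hne : ¬(p.1 = 0 ∧ p.2 = n) := by
          intro hc; exact hp.1 (Prod.ext hc.1 hc.2)
        have hp1 : p.1 < n := by omega
        have hp2 : p.2 < n := by omega
        rw [ih p.1 hp1, ih p.2 hp2]
    have h2n : ((2 : ℂ) ^ n - 1) ≠ 0 := by
      have hcast : ((2 : ℂ) ^ n) = ((2 ^ n : ℕ) : ℂ) := by push_cast; ring
      rw [hcast, sub_ne_zero]
      exact_mod_cast (Nat.one_lt_two_pow (by omega : n ≠ 0)).ne'
    exact mul_left_cancel₀ h2n (by rw [hH, hH', hsum])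

lemma three_inv_sum (x y : ℂ) (hx : x ≠ 0) (hy : y ≠ 0) (hxy : x + y ≠ 0) :
    x⁻¹ * (x + y)⁻¹ + (-x)⁻¹ * y⁻¹ + (-(x + y))⁻¹ * (-y)⁻¹ = 0 := by
  have h : x⁻¹ * (x + y)⁻¹ + (-x)⁻¹ * y⁻¹ + (-(x + y))⁻¹ * (-y)⁻¹
      = (y - (x + y) + x) * (x⁻¹ * y⁻¹ * (x + y)⁻¹) := by
    rw [inv_neg, inv_neg, inv_neg]
    field_simp
    ring
  rw [h, show y - (x + y) + x = 0 from by ring, zero_mul]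

lemma algRigid_of_Dab {H : PowerSeries ℂ}
    (heven : ∀ n : ℕ, Odd n → PowerSeries.coeff n H = 0)
    {a : ℂ} (hD : IsDab a 0 H) : AlgRigid H 2 := by
  intro m hm1 hm2 w hw k hk
  interval_cases m
  · rw [SH_two_eq_zero heven w, HahnSeries.coeff_zero]
  · rw [SH_three]
    set u := w 1 - w 0 with hu_def
    set v := w 2 - w 1 with hv_def
    have hu : u ≠ 0 := sub_ne_zero.2 fun h => absurd (hw h) (by decide)
    have hv : v ≠ 0 := sub_ne_zero.2 fun h => absurd (hw h) (by decide)
    have huv : u + v ≠ 0 := by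
      rw [hu_def, hv_def]
      intro h
      exact absurd (hw (by linarith : w 2 = w 0)) (by decide)
    rw [show w 2 - w 0 = u + v from by rw [hu_def, hv_def]; ring,
      show w 0 - w 1 = -u from by rw [hu_def]; ring,
      show w 0 - w 2 = -(u + v) from by rw [hu_def, hv_def]; ring,
      show w 1 - w 2 = -v from by rw [hv_def]; ring]
    rcases hD with ⟨ha, heq⟩ | ⟨_, hone⟩
    · rw [map_zero, zero_mul, add_zero] at heq
      rw [SH_key ha heq hu hv huv, HahnSeries.C_apply, HahnSeries.coeff_single_of_ne hk]
    · have hH1 : H = 1 := by rw [hone, map_zero, zero_mul, add_zero]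
      have hFH : FH H = HahnSeries.single (-1 : ℤ) (1 : ℂ) := by
        rw [hH1, FH, RingHom.map_one, mul_one]
      have hcu : ((u : ℤ) : ℂ) ≠ 0 := Int.cast_ne_zero.2 hu
      have hcv : ((v : ℤ) : ℂ) ≠ 0 := Int.cast_ne_zero.2 hv
      have hcuv : ((u : ℤ) : ℂ) + ((v : ℤ) : ℂ) ≠ 0 := by
        rw [← Int.cast_add]; exact Int.cast_ne_zero.2 huv
      simp only [hFH, zscale_single, HahnSeries.single_mul_single, HahnSeries.coeff_add,
        HahnSeries.coeff_single, zpow_neg_one, mul_one]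
      rcases eq_or_ne k (-2 : ℤ) with rfl | hk2
      · norm_num
        rw [show ((-(v : ℂ)) + -(u : ℂ)) = -((u : ℂ) + (v : ℂ)) from by ring]
        have h3 := three_inv_sum _ _ hcu hcv hcuv
        simp only [inv_neg] at h3 ⊢
        linear_combination h3
      · simp [hk2]

lemma exists_Dab_series {a : ℂ} (ha : a ≠ 0) :
    ∃ H' : PowerSeries ℂ,
      (H' * (expS a - expS (-a))
        = PowerSeries.X * (PowerSeries.C a * (expS a + expS (-a)))) ∧
      PowerSeries.constantCoeff H' = 1 ∧
      (∀ n : ℕ, Odd n → PowerSeries.coeff n H' = 0) ∧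
      PowerSeries.coeff 2 H' = a ^ 2 / 3 := by
  have hs0 : PowerSeries.constantCoeff (expS a - expS (-a)) = 0 := by
    rw [map_sub, constantCoeff_expS, constantCoeff_expS, sub_self]
  obtain ⟨u, hu⟩ := PowerSeries.X_dvd_iff.2 hs0
  have hu0 : PowerSeries.constantCoeff u = 2 * a := by
    have h1 := congrArg (PowerSeries.coeff 1) hu
    rw [map_sub, coeff_expS, coeff_expS] at h1
    rw [show (1 : ℕ) = 0 + 1 from rfl, PowerSeries.coeff_succ_X_mul,
      PowerSeries.coeff_zero_eq_constantCoeff] at h1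
    rw [← h1]
    norm_num
    ring
  have hu_unit : IsUnit u := by
    rw [PowerSeries.isUnit_iff_constantCoeff, hu0]
    exact (mul_ne_zero two_ne_zero ha).isUnit
  obtain ⟨U, rfl⟩ := hu_unit
  obtain ⟨H', hH'_def⟩ : ∃ H' : PowerSeries ℂ,
      H' = PowerSeries.C a * (expS a + expS (-a)) * (↑U⁻¹ : PowerSeries ℂ) := ⟨_, rfl⟩
  have hUU : ((↑U⁻¹ : PowerSeries ℂ) * ↑U) = 1 := U.inv_mul
  have heq : H' * (expS a - expS (-a))
      = PowerSeries.X * (PowerSeries.C a * (expS a + expS (-a))) := by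
    rw [hu, hH'_def]
    linear_combination (PowerSeries.X * (PowerSeries.C a * (expS a + expS (-a)))) * hUU
  have hUinv0 : PowerSeries.constantCoeff (↑U⁻¹ : PowerSeries ℂ) = (2 * a)⁻¹ := by
    have h := congrArg (PowerSeries.constantCoeff) hUU
    rw [map_mul, map_one, hu0] at h
    exact eq_inv_of_mul_eq_one_right (by rwa [mul_comm] at h)
  have h0' : PowerSeries.constantCoeff H' = 1 := by
    rw [hH'_def, map_mul, map_mul, PowerSeries.constantCoeff_C, map_add,
      constantCoeff_expS, constantCoeff_expS, hUinv0]
    field_simp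
    ring
  -- evenness, via invariance under rescale (-1)
  have hsne : (expS a - expS (-a)) ≠ 0 := by
    intro h
    have h1 := congrArg (PowerSeries.coeff 1) h
    rw [map_sub, coeff_expS, coeff_expS, map_zero] at h1
    norm_num at h1
    exact ha h1
  have hres : PowerSeries.rescale (-1 : ℂ) H' = H' := by
    have e1 : PowerSeries.rescale (-1 : ℂ) (expS a) = expS (-a) := by
      rw [rescale_expS]; congr 1; ring
    have e2 : PowerSeries.rescale (-1 : ℂ) (expS (-a)) = expS a := by
      rw [rescale_expS]; congr 1; ring
    have h1 : PowerSeries.rescale (-1 : ℂ) H'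
          * PowerSeries.rescale (-1 : ℂ) (expS a - expS (-a))
        = PowerSeries.rescale (-1 : ℂ)
            (PowerSeries.X * (PowerSeries.C a * (expS a + expS (-a)))) := by
      rw [← map_mul, heq]
    rw [map_sub, e1, e2, map_mul, map_mul, map_add, e1, e2, PowerSeries.rescale_X,
      rescale_C', map_neg, map_one] at h1
    apply mul_right_cancel₀ hsne
    rw [heq]
    linear_combination -h1
  have heven' : ∀ n : ℕ, Odd n → PowerSeries.coeff n H' = 0 := by
    intro n hn
    have h1 := congrArg (PowerSeries.coeff n) hres
    rw [PowerSeries.coeff_rescale, hn.neg_one_pow, neg_one_mul] at h1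
    have h2 : (2 : ℂ) * PowerSeries.coeff n H' = 0 := by linear_combination -h1
    have := mul_eq_zero.1 h2
    simpa using this
  -- the coefficient of degree 2, from the coefficient of degree 3 in the equation
  have h2' : PowerSeries.coeff 2 H' = a ^ 2 / 3 := by
    have h3 := congrArg (PowerSeries.coeff 3) heq
    rw [PowerSeries.coeff_mul, Finset.Nat.sum_antidiagonal_eq_sum_range_succ_mk] at h3
    rw [show (3 : ℕ) = 2 + 1 from rfl, PowerSeries.coeff_succ_X_mul] at h3
    simp only [Finset.sum_range_succ, Finset.sum_range_zero, zero_add, map_sub, map_add,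
      map_mul, coeff_expS, PowerSeries.coeff_C_mul] at h3
    rw [PowerSeries.coeff_zero_eq_constantCoeff] at h3
    rw [h0', heven' 1 (by norm_num)] at h3
    norm_num [Nat.factorial] at h3
    rw [eq_div_iff (by norm_num : (3 : ℂ) ≠ 0)]
    apply mul_left_cancel₀ (mul_ne_zero two_ne_zero ha)
    linear_combination 3 * h3
  exact ⟨H', heq, h0', heven', h2'⟩

/-- Theorem 4.2, complex case: an even `H ∈ ℂ[[t]]` with constant term 1 is
2-algebraically rigid iff `H = D_{a,0}` for some `a ∈ ℂ` (formally `H = at·coth(at)`,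
with `H = 1` for `a = 0`). -/
theorem even_algRigid_two_iff (H : PowerSeries ℂ)
    (hH : PowerSeries.constantCoeff H = 1)
    (heven : ∀ n : ℕ, Odd n → PowerSeries.coeff n H = 0) :
    AlgRigid H 2 ↔ ∃ a : ℂ, IsDab a 0 H := by
  constructor
  · intro hrig
    obtain ⟨a, ha2⟩ := IsAlgClosed.exists_pow_nat_eq (3 * PowerSeries.coeff 2 H)
      (n := 2) (by norm_num)
    have hinj : Function.Injective (![0, 1, 2] : Fin 3 → ℤ) := by decide
    have h012 : ∀ k : ℤ, k ≠ 0 → (SH H ![0, 1, 2]).coeff k = 0 :=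
      fun k hk => hrig 2 (by norm_num) (by norm_num) ![0, 1, 2] hinj k hk
    have hQ : ∀ n : ℕ, n ≠ 2 →
        PowerSeries.coeff n (H * PowerSeries.rescale 2 H - H * H) = 0 :=
      fun n hn => Q_coeff_zero heven h012 hn
    rcases eq_or_ne a 0 with rfl | ha
    · --, then coeff 2 H = 0 and H = 1
      have h2H : PowerSeries.coeff 2 H = 0 := by
        have : (3 : ℂ) * PowerSeries.coeff 2 H = 0 := by rw [← ha2]; norm_num
        simpa using this
      have hH1 : H = 1 := by
        refine unique_of_Q hH (by simp) ?_ hQ ?_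
        · rw [h2H]; simp
        · intro n hn
          simp
      exact ⟨0, Or.inr ⟨rfl, by rw [hH1, map_zero, zero_mul, add_zero]⟩⟩
    · obtain ⟨H', heq, h0', heven', h2'⟩ := exists_Dab_series ha
      have hD' : IsDab a 0 H' := Or.inl ⟨ha, by rw [map_zero, zero_mul, add_zero]; exact heq⟩
      have hrig' : AlgRigid H' 2 := algRigid_of_Dab heven' hD'
      have h012' : ∀ k : ℤ, k ≠ 0 → (SH H' ![0, 1, 2]).coeff k = 0 :=
        fun k hk => hrig' 2 (by norm_num) (by norm_num) ![0, 1, 2] hinj k hk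
      have hQ' : ∀ n : ℕ, n ≠ 2 →
          PowerSeries.coeff n (H' * PowerSeries.rescale 2 H' - H' * H') = 0 :=
        fun n hn => Q_coeff_zero heven' h012' hn
      have h2eq : PowerSeries.coeff 2 H = PowerSeries.coeff 2 H' := by
        rw [h2', ha2]
        ring
      have : H = H' := unique_of_Q hH h0' h2eq hQ hQ'
      exact ⟨a, Or.inl ⟨ha, by rw [this, map_zero, zero_mul, add_zero]; exact heq⟩⟩
  · rintro ⟨a, hD⟩
    exact algRigid_of_Dab heven hD

end RigidGenus
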